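/- arXiv:2106.16159 — 4 statements merged into one kernel-verified Lean document; each statement's English description precedes it below -/
import Mathlib

section
/- Let H be a real Hilbert space, f : H → ℝ a C² function, e : [t0,∞) → H a C¹ function, α ≥ 0 and β > 0, and t0 > 0. Then a function x : [t0,∞) → H is a (C²) solution of the perturbed explicit-Hessian system ẍ(t) + (α/t)ẋ(t) + β(∇²f(x(t))ẋ(t) + ė(t)) + ∇f(x(t)) + e(t) = 0 with initial conditions x(t0)=x0, ẋ(t0)=ẋ0 if and only if the pair (x,y) : [t0,∞) → H × H solves the first-order system ẋ(t) + β(∇f(x(t)) + e(t)) − (1/β − α/t)x(t) + (1/β)y(t) = 0 and ẏ(t) − (1/β − α/t + αβ/t²)x(t) + (1/β)y(t) = 0, with x(t0)=x0 and y(t0) = −β(ẋ0 + β∇f(x0)) + (1 − βα/t0)x0 − β²e(t0). -/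
open MeasureTheory Filter

/-- `g` is of class `C¹` on a set `s` (of times): differentiable at every point of `s`
with derivative continuous on `s`. -/
def IsC1On {H : Type*} [NormedAddCommGroup H] [NormedSpace ℝ H]
    (g : ℝ → H) (s : Set ℝ) : Prop :=
  (∀ t ∈ s, DifferentiableAt ℝ g t) ∧ ContinuousOn (deriv g) s

/-- `g` is of class `C²` on a set `s` of times. -/
def IsC2On {H : Type*} [NormedAddCommGroup H] [NormedSpace ℝ H]
    (g : ℝ → H) (s : Set ℝ) : Prop :=
  (∀ t ∈ s, DifferentiableAt ℝ g t) ∧ IsC1On (deriv g) s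

lemma gradient_differentiable {H : Type*} [NormedAddCommGroup H] [InnerProductSpace ℝ H]
    [CompleteSpace H] {f : H → ℝ} (hf : ContDiff ℝ 2 f) :
    Differentiable ℝ (gradient f) := by
  have h1 : ContDiff ℝ 1 (fderiv ℝ f) := hf.fderiv_right (by norm_num)
  have h2 : Differentiable ℝ (fderiv ℝ f) := h1.differentiable one_ne_zero
  exact ((InnerProductSpace.toDual ℝ H).symm.toContinuousLinearEquiv.differentiable).comp h2

lemma deriv_congr_of_eqOn {H : Type*} [NormedAddCommGroup H] [NormedSpace ℝ H]
    {g₁ g₂ : ℝ → H} {t0 t : ℝ} (ht : t0 ≤ t) (h : Set.EqOn g₁ g₂ (Set.Ici t0))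
    (h1 : DifferentiableAt ℝ g₁ t) (h2 : DifferentiableAt ℝ g₂ t) :
    deriv g₁ t = deriv g₂ t := by
  have hu : UniqueDiffWithinAt ℝ (Set.Ici t0) t := uniqueDiffOn_Ici t0 t ht
  rw [← h1.derivWithin hu, ← h2.derivWithin hu]
  exact derivWithin_congr h (h ht)

lemma aux_hasDerivAt {H : Type*} [NormedAddCommGroup H] [InnerProductSpace ℝ H]
    [CompleteSpace H] (f : H → ℝ) (e x : ℝ → H) (α β t : ℝ) (htne : t ≠ 0)
    (hf : ContDiff ℝ 2 f)
    (hxd : DifferentiableAt ℝ x t) (hxd2 : DifferentiableAt ℝ (deriv x) t)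
    (hed : DifferentiableAt ℝ e t) :
    HasDerivAt (fun s => (1 - β*α/s) • x s - β • deriv x s
        - (β^2) • gradient f (x s) - (β^2) • e s)
      ((β*α/t^2) • x t + (1 - β*α/t) • deriv x t - β • deriv (deriv x) t
        - (β^2) • deriv (fun s => gradient f (x s)) t - (β^2) • deriv e t) t := by
  have hg : DifferentiableAt ℝ (fun s => gradient f (x s)) t :=
    ((gradient_differentiable hf) (x t)).comp t hxd
  have h1 : HasDerivAt (fun s : ℝ => s⁻¹) (-(t^2)⁻¹) t := hasDerivAt_inv htne
  have h3 : HasDerivAt (fun s : ℝ => 1 - β*α * s⁻¹) (-(β*α * -(t^2)⁻¹)) t :=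
    (h1.const_mul (β*α)).const_sub 1
  have hscal : HasDerivAt (fun s : ℝ => 1 - β*α/s) (β*α/t^2) t := by
    have : β*α/t^2 = -(β*α * -(t^2)⁻¹) := by field_simp
    rw [this]
    simpa [div_eq_mul_inv] using h3
  exact ((hscal.smul hxd.hasDerivAt).sub (hxd2.hasDerivAt.const_smul β)).sub
      (hg.hasDerivAt.const_smul (β^2)) |>.sub (hed.hasDerivAt.const_smul (β^2))
      |>.congr_deriv (by abel)

/-- Equivalence between the perturbed second-order system with explicit Hessian driven
damping (ISEHD-Pert) and its first-order (in time and space) reformulation. -/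
theorem isehd_pert_first_order_equiv
    {H : Type*} [NormedAddCommGroup H] [InnerProductSpace ℝ H] [CompleteSpace H]
    (f : H → ℝ) (e x : ℝ → H) (t0 α β : ℝ) (x0 v0 : H)
    (ht0 : 0 < t0) (hα : 0 ≤ α) (hβ : 0 < β)
    (hf : ContDiff ℝ 2 f)
    (he : IsC1On e (Set.Ici t0))
    (hx : IsC2On x (Set.Ici t0)) :
    -- `x` solves (ISEHD-Pert) with the given Cauchy data
    (x t0 = x0 ∧ deriv x t0 = v0 ∧
      ∀ t, t0 ≤ t →
        deriv (deriv x) t + (α / t) • deriv x t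
          + β • (deriv (fun s => gradient f (x s)) t + deriv e t)
          + gradient f (x t) + e t = 0)
    ↔
    -- `(x, y)` solves the first-order reformulation with the given Cauchy data
    (∃ y : ℝ → H, (∀ t, t0 ≤ t → DifferentiableAt ℝ y t) ∧
      x t0 = x0 ∧
      y t0 = -(β • (v0 + β • gradient f x0)) + (1 - β * α / t0) • x0 - (β ^ 2) • e t0 ∧
      ∀ t, t0 ≤ t →
        (deriv x t + β • (gradient f (x t) + e t)
            - (1 / β - α / t) • x t + β⁻¹ • y t = 0 ∧
         deriv y t - (1 / β - α / t + α * β / t ^ 2) • x t + β⁻¹ • y t = 0)) := by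
  have hβ' : β ≠ 0 := ne_of_gt hβ
  set F : ℝ → H := fun s => (1 - β*α/s) • x s - β • deriv x s
      - (β^2) • gradient f (x s) - (β^2) • e s with hF
  have hFdiff : ∀ t, t0 ≤ t → DifferentiableAt ℝ F t := fun t ht =>
    (aux_hasDerivAt f e x α β t (ne_of_gt (lt_of_lt_of_le ht0 ht)) hf
      (hx.1 t ht) (hx.2.1 t ht) (he.1 t ht)).differentiableAt
  have hFderiv : ∀ t, t0 ≤ t → deriv F t =
      (β*α/t^2) • x t + (1 - β*α/t) • deriv x t - β • deriv (deriv x) t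
        - (β^2) • deriv (fun s => gradient f (x s)) t - (β^2) • deriv e t := fun t ht =>
    (aux_hasDerivAt f e x α β t (ne_of_gt (lt_of_lt_of_le ht0 ht)) hf
      (hx.1 t ht) (hx.2.1 t ht) (he.1 t ht)).deriv
  constructor
  · rintro ⟨hx0, hv0, hode⟩
    refine ⟨F, hFdiff, hx0, ?_, ?_⟩
    · rw [hF]
      simp only [hx0, hv0]
      match_scalars <;> ring
    · intro t ht
      have ht' : t ≠ 0 := ne_of_gt (lt_of_lt_of_le ht0 ht)
      constructor
      · rw [hF]
        match_scalars <;> (field_simp; try ring)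
      · rw [hFderiv t ht]
        have h := hode t ht
        have hxx : deriv (deriv x) t = -((α / t) • deriv x t
            + β • (deriv (fun s => gradient f (x s)) t + deriv e t)
            + gradient f (x t) + e t) := by
          rw [eq_neg_iff_add_eq_zero, ← h]; abel
        rw [hxx, hF]
        match_scalars <;> (field_simp; try ring)
  · rintro ⟨y, hydiff, hx0, hy0, hsys⟩
    have hyF : Set.EqOn y F (Set.Ici t0) := by
      intro t ht
      have ht' : t ≠ 0 := ne_of_gt (lt_of_lt_of_le ht0 ht)
      have h1 := (hsys t ht).1
      have key : y t - F t = β • (deriv x t + β • (gradient f (x t) + e t)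
          - (1 / β - α / t) • x t + β⁻¹ • y t) := by
        rw [hF]
        match_scalars <;> (field_simp; try ring)
      rw [h1, smul_zero] at key
      exact sub_eq_zero.mp key
    have hv0 : deriv x t0 = v0 := by
      have h1 := (hsys t0 le_rfl).1
      have ht' : t0 ≠ 0 := ne_of_gt ht0
      have key : deriv x t0 - v0 = deriv x t0 + β • (gradient f (x t0) + e t0)
          - (1 / β - α / t0) • x t0 + β⁻¹ • y t0 := by
        rw [hy0, hx0]
        match_scalars <;> (field_simp; try ring)
      rw [h1] at key
      exact sub_eq_zero.mp (by rw [key])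
    refine ⟨hx0, hv0, ?_⟩
    intro t ht
    have ht' : t ≠ 0 := ne_of_gt (lt_of_lt_of_le ht0 ht)
    have h2 := (hsys t ht).2
    have hdy : deriv y t = deriv F t :=
      deriv_congr_of_eqOn ht hyF (hydiff t ht) (hFdiff t ht)
    rw [hdy, hFderiv t ht, hyF ht, hF] at h2
    have key : deriv (deriv x) t + (α / t) • deriv x t
          + β • (deriv (fun s => gradient f (x s)) t + deriv e t)
          + gradient f (x t) + e t
        = (-β⁻¹ : ℝ) • (((β*α/t^2) • x t + (1 - β*α/t) • deriv x t
            - β • deriv (deriv x) t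
            - (β^2) • deriv (fun s => gradient f (x s)) t - (β^2) • deriv e t)
          - (1 / β - α / t + α * β / t ^ 2) • x t
          + β⁻¹ • ((1 - β*α/t) • x t - β • deriv x t
            - (β^2) • gradient f (x t) - (β^2) • e t)) := by
      match_scalars <;> (field_simp; try ring)
    rw [key, h2, smul_zero]
end

section
/- Let H be a real Hilbert space, f : H → ℝ a C¹ function, α ≥ 0, β : [t0,∞) → ℝ a C¹ function with inf_{t≥t0} β(t) > 0, and e : [t0,∞) → H continuous. Write α(t) = α/t. Then x : [t0,∞) → H solves the perturbed implicit-Hessian system ẍ(t) + (α/t)ẋ(t) + ∇f(x(t) + β(t)ẋ(t)) + e(t) = 0 with x(t0)=x0, ẋ(t0)=ẋ0 if and only if the pair (x,y) : [t0,∞) → H × H solves the first-order system ẋ(t) + (1/β(t))x(t) − (1/β(t))y(t) = 0 and ẏ(t) + β(t)(∇f(y(t)) + e(t)) + (1/β(t))(1 − α(t)β(t) + β̇(t))(x(t) − y(t)) = 0, with x(t0)=x0 and y(t0) = x0 + β(t0)ẋ0. -/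
open MeasureTheory Filter

/-- Equivalence between the perturbed second-order system with implicit Hessian driven
damping (ISIHD-Pert) and its first-order (in time and space) reformulation.
Here `bb` is the coefficient function `β(·)`, assumed `C¹` with positive infimum on
`[t0, ∞)`, and `α(t) = α / t`. -/
theorem isihd_pert_first_order_equiv
    {H : Type*} [NormedAddCommGroup H] [InnerProductSpace ℝ H] [CompleteSpace H]
    (f : H → ℝ) (e x : ℝ → H) (bb : ℝ → ℝ) (t0 α : ℝ) (x0 v0 : H)
    (ht0 : 0 < t0) (hα : 0 ≤ α)
    (hf : ContDiff ℝ 1 f)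
    (hbb : IsC1On bb (Set.Ici t0))
    (hbbpos : ∃ c > 0, ∀ t, t0 ≤ t → c ≤ bb t)
    (he : ContinuousOn e (Set.Ici t0))
    (hx : IsC2On x (Set.Ici t0)) :
    -- `x` solves (ISIHD-Pert) with the given Cauchy data
    (x t0 = x0 ∧ deriv x t0 = v0 ∧
      ∀ t, t0 ≤ t →
        deriv (deriv x) t + (α / t) • deriv x t
          + gradient f (x t + bb t • deriv x t) + e t = 0)
    ↔
    -- `(x, y)` solves the first-order reformulation with the given Cauchy data
    (∃ y : ℝ → H, (∀ t, t0 ≤ t → DifferentiableAt ℝ y t) ∧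
      x t0 = x0 ∧ y t0 = x0 + bb t0 • v0 ∧
      ∀ t, t0 ≤ t →
        (deriv x t + (bb t)⁻¹ • x t - (bb t)⁻¹ • y t = 0 ∧
         deriv y t + bb t • (gradient f (y t) + e t)
           + ((1 - (α / t) * bb t + deriv bb t) / bb t) • (x t - y t) = 0)) := by
  obtain ⟨c, hc, hcb⟩ := hbbpos
  have hbne : ∀ t, t0 ≤ t → bb t ≠ 0 := fun t ht => ne_of_gt (lt_of_lt_of_le hc (hcb t ht))
  obtain ⟨hdx, hddx, _⟩ := hx
  obtain ⟨hdbb, _⟩ := hbb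
  constructor
  · rintro ⟨hx0, hv0, hODE⟩
    refine ⟨fun t => x t + bb t • deriv x t, ?_, hx0, by show x t0 + bb t0 • deriv x t0 = _; rw [hx0, hv0], ?_⟩
    · intro t ht
      exact (hdx t ht).add (((hdbb t ht).smul (hddx t ht)))
    · intro t ht
      have hbn := hbne t ht
      have hy : HasDerivAt (fun s => x s + bb s • deriv x s)
          (deriv x t + (bb t • deriv (deriv x) t + deriv bb t • deriv x t)) t :=
        ((hdx t ht).hasDerivAt).add (((hdbb t ht).hasDerivAt).smul ((hddx t ht).hasDerivAt))
      have hdd : deriv (deriv x) t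
          = -((α / t) • deriv x t + gradient f (x t + bb t • deriv x t) + e t) :=
        eq_neg_of_add_eq_zero_left (by rw [← hODE t ht]; abel)
      constructor
      · match_scalars <;> field_simp <;> ring
      · rw [hy.deriv, hdd]
        match_scalars <;> field_simp <;> ring
  · rintro ⟨y, hdy, hx0, hy0, hsys⟩
    have hxd : ∀ t, t0 ≤ t → deriv x t = (bb t)⁻¹ • (y t - x t) := by
      intro t ht
      have h1 := (hsys t ht).1
      rw [smul_sub, ← sub_eq_zero, ← h1]; abel
    have hv0 : deriv x t0 = v0 := by
      rw [hxd t0 le_rfl, hy0, hx0]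
      rw [add_sub_cancel_left, smul_smul, inv_mul_cancel₀ (hbne t0 le_rfl), one_smul]
    refine ⟨hx0, hv0, ?_⟩
    intro t ht
    have hbn := hbne t ht
    have htne : t ≠ 0 := ne_of_gt (lt_of_lt_of_le ht0 ht)
    have hg : HasDerivAt (fun s => (bb s)⁻¹ • (y s - x s))
        ((bb t)⁻¹ • (deriv y t - deriv x t)
          + (-(deriv bb t) / bb t ^ 2) • (y t - x t)) t :=
      (((hdbb t ht).hasDerivAt).inv hbn).smul (((hdy t ht).hasDerivAt).sub ((hdx t ht).hasDerivAt))
    have hdd : deriv (deriv x) t = deriv (fun s => (bb s)⁻¹ • (y s - x s)) t := by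
      rw [← (hddx t ht).derivWithin (uniqueDiffOn_Ici t0 t ht),
        ← hg.differentiableAt.derivWithin (uniqueDiffOn_Ici t0 t ht)]
      exact derivWithin_congr (fun s hs => hxd s hs) (hxd t ht)
    have harg : x t + bb t • deriv x t = y t := by
      rw [hxd t ht, smul_smul, mul_inv_cancel₀ hbn, one_smul, add_sub_cancel]
    have hyd : deriv y t = -(bb t • (gradient f (y t) + e t)
        + ((1 - (α / t) * bb t + deriv bb t) / bb t) • (x t - y t)) :=
      eq_neg_of_add_eq_zero_left (by rw [← (hsys t ht).2]; abel)
    rw [hdd, hg.deriv, harg, hyd, hxd t ht]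
    match_scalars <;> field_simp <;> ring
end

section
/- Let H be a real Hilbert space, f : H → ℝ a convex C² function with a minimizer x⋆, and e : [t0,∞) → H a C¹ function with ∫_{t0}^∞ t‖e(t)‖ dt < ∞ and ∫_{t0}^∞ t‖ė(t)‖ dt < ∞. Let α > 3, β > 0, and let x : [t0,∞) → H be a solution of ẍ(t) + (α/t)ẋ(t) + β(∇²f(x(t))ẋ(t) + ė(t)) + ∇f(x(t)) + e(t) = 0. Define v(t) = (α−1)(x(t) − x⋆) + t(ẋ(t) + β∇f(x(t))). Then sup_{t ≥ t0} ‖v(t)‖ < ∞, and moreover the trajectory x is bounded: sup_{t ≥ t0} ‖x(t)‖ < ∞. -/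
open MeasureTheory Filter
open InnerProductSpace



lemma grad_contDiff {H : Type*} [NormedAddCommGroup H] [InnerProductSpace ℝ H] [CompleteSpace H] {f : H → ℝ} (hf : ContDiff ℝ 2 f) : ContDiff ℝ 1 (gradient f) := by
  have h1 : ContDiff ℝ 1 (fderiv ℝ f) := hf.fderiv_right (by norm_num)
  have : gradient f = fun z => (toDual ℝ H).symm (fderiv ℝ f z) := rfl
  rw [this]
  exact ((toDual ℝ H).symm.toContinuousLinearEquiv : (H →L[ℝ] ℝ) ≃L[ℝ] H).contDiff.comp h1

lemma inner_grad_eq {H : Type*} [NormedAddCommGroup H] [InnerProductSpace ℝ H] [CompleteSpace H] (f : H → ℝ) (a y : H) :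
    ⟪gradient f a, y⟫_ℝ = fderiv ℝ f a y := by
  rw [gradient, toDual_symm_apply]


lemma convex_grad_ineq {H : Type*} [NormedAddCommGroup H] [InnerProductSpace ℝ H] [CompleteSpace H] {f : H → ℝ} (hconv : ConvexOn ℝ Set.univ f) {a : H}
    (hd : DifferentiableAt ℝ f a) (b : H) :
    ⟪gradient f a, b - a⟫_ℝ ≤ f b - f a := by
  have hphi : ConvexOn ℝ Set.univ (f ∘ (AffineMap.lineMap a b : ℝ →ᵃ[ℝ] H)) := by
    have := hconv.comp_affineMap (AffineMap.lineMap a b : ℝ →ᵃ[ℝ] H)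
    simpa using this
  have hline : HasDerivAt (fun s : ℝ => (AffineMap.lineMap a b : ℝ →ᵃ[ℝ] H) s) (b - a) 0 := by
    have h : HasDerivAt (fun s : ℝ => s • (b - a) + a) ((1:ℝ) • (b - a)) 0 :=
      ((hasDerivAt_id 0).smul_const (b - a)).add_const a
    have heq : (fun s : ℝ => (AffineMap.lineMap a b : ℝ →ᵃ[ℝ] H) s)
        = fun s : ℝ => s • (b - a) + a := by
      funext s; simp [AffineMap.lineMap_apply_module']
    rw [heq]; simpa using h
  have hda : HasDerivAt (f ∘ (AffineMap.lineMap a b : ℝ →ᵃ[ℝ] H)) (fderiv ℝ f a (b - a)) 0 := by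
    have h0 : (AffineMap.lineMap a b : ℝ →ᵃ[ℝ] H) 0 = a := by simp
    have hfd2 : HasFDerivAt f (fderiv ℝ f a) ((AffineMap.lineMap a b : ℝ →ᵃ[ℝ] H) 0) := by
      rw [h0]; exact hd.hasFDerivAt
    exact hfd2.comp_hasDerivAt 0 hline
  have := hphi.le_slope_of_hasDerivAt (Set.mem_univ (0:ℝ)) (Set.mem_univ (1:ℝ)) one_pos hda
  rw [inner_grad_eq]
  simpa [slope] using this

set_option maxHeartbeats 1000000 in
/-- Boundedness of the anchored momentum `v(t) = (α−1)(x(t)−x⋆) + t(ẋ(t) + β∇f(x(t)))`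
and of the trajectory, for the perturbed inertial system with explicit Hessian driven
damping (ISEHD-Pert). -/
theorem isehd_pert_bounded_v_and_trajectory
    {H : Type*} [NormedAddCommGroup H] [InnerProductSpace ℝ H] [CompleteSpace H]
    (f : H → ℝ) (e x : ℝ → H) (xstar : H) (t0 α β : ℝ)
    (ht0 : 0 < t0) (hα : 3 < α) (hβ : 0 < β)
    (hf : ContDiff ℝ 2 f) (hconv : ConvexOn ℝ Set.univ f)
    (hmin : ∀ z, f xstar ≤ f z)
    (he1 : ∀ t, t0 ≤ t → DifferentiableAt ℝ e t)
    (he2 : ContinuousOn (deriv e) (Set.Ici t0))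
    (heint : IntegrableOn (fun t => t * ‖e t‖) (Set.Ici t0))
    (heint' : IntegrableOn (fun t => t * ‖deriv e t‖) (Set.Ici t0))
    (hx1 : ∀ t, t0 ≤ t → DifferentiableAt ℝ x t)
    (hx2 : ∀ t, t0 ≤ t → DifferentiableAt ℝ (deriv x) t)
    (hsol : ∀ t, t0 ≤ t →
      deriv (deriv x) t + (α / t) • deriv x t
        + β • (deriv (fun s => gradient f (x s)) t + deriv e t)
        + gradient f (x t) + e t = 0) :
    (∃ M : ℝ, ∀ t, t0 ≤ t →
      ‖(α - 1) • (x t - xstar) + t • (deriv x t + β • gradient f (x t))‖ ≤ M) ∧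
    (∃ M : ℝ, ∀ t, t0 ≤ t → ‖x t‖ ≤ M) := by
  have hfd : Differentiable ℝ f := hf.differentiable two_ne_zero
  have hgrad1 : ContDiff ℝ 1 (gradient f) := grad_contDiff hf
  have hgradDiff : Differentiable ℝ (gradient f) := hgrad1.differentiable one_ne_zero
  have hgradcont : Continuous (gradient f) := hgradDiff.continuous
  -- abbreviations
  set G : ℝ → H := fun s => gradient f (x s) with hGdef
  set W : ℝ → H := fun s => e s + β • deriv e s with hWdef
  set V : ℝ → H := fun s =>
    (α - 1) • (x s - xstar) + s • (deriv x s + β • G s) with hVdef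
  set V' : ℝ → H := fun s => -(s - β) • G s - s • W s with hV'def
  set g : ℝ → ℝ := fun s => f (x s) - f xstar with hgdef
  set EE : ℝ → ℝ := fun s => s * (s - β) * g s + (1/2) * ⟪V s, V s⟫_ℝ with hEEdef
  set EE' : ℝ → ℝ := fun s =>
    ((2*s - β) * g s + s*(s-β) * ⟪G s, deriv x s⟫_ℝ) + ⟪V s, V' s⟫_ℝ with hEE'def
  set hh : ℝ → ℝ := fun s => s * ‖W s‖ with hhhdef
  -- pointwise facts
  have hxD : ∀ t, t0 ≤ t → HasDerivAt x (deriv x t) t := fun t ht => (hx1 t ht).hasDerivAt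
  have hx'D : ∀ t, t0 ≤ t → HasDerivAt (deriv x) (deriv (deriv x) t) t :=
    fun t ht => (hx2 t ht).hasDerivAt
  have hGdiff : ∀ t, t0 ≤ t → DifferentiableAt ℝ G t := by
    intro t ht
    have h : DifferentiableAt ℝ (gradient f ∘ x) t :=
      DifferentiableAt.comp (hg := hgradDiff (x t)) t (hx1 t ht)
    exact h
  have hGD : ∀ t, t0 ≤ t → HasDerivAt G (deriv G t) t := fun t ht => (hGdiff t ht).hasDerivAt
  have hg0 : ∀ t, 0 ≤ g t := fun t => sub_nonneg.2 (hmin (x t))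
  -- derivative of V
  have hVD : ∀ t, t0 ≤ t → HasDerivAt V (V' t) t := by
    intro t ht
    have htpos : (0:ℝ) < t := lt_of_lt_of_le ht0 ht
    have h1 : HasDerivAt (fun s => (α-1) • (x s - xstar)) ((α-1) • deriv x t) t :=
      ((hxD t ht).sub_const xstar).const_smul (α-1)
    have h2 : HasDerivAt (fun s => deriv x s + β • G s)
        (deriv (deriv x) t + β • deriv G t) t :=
      (hx'D t ht).add ((hGD t ht).const_smul β)
    have h3 : HasDerivAt (fun s => s • (deriv x s + β • G s))
        (t • (deriv (deriv x) t + β • deriv G t) + (1:ℝ) • (deriv x t + β • G t)) t :=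
      (hasDerivAt_id t).smul h2
    have hsum := h1.add h3
    have hA : deriv (deriv x) t + β • deriv G t
        = -((α/t) • deriv x t) - β • deriv e t - G t - e t := by
      have h := hsol t ht
      rw [smul_add] at h
      linear_combination (norm := module) h
    have : (α-1) • deriv x t
        + (t • (deriv (deriv x) t + β • deriv G t) + (1:ℝ) • (deriv x t + β • G t))
        = V' t := by
      rw [hA, hV'def, hWdef]
      have htne : t ≠ 0 := ne_of_gt htpos
      match_scalars <;> field_simp <;> ring
    rw [← this]
    exact hsum
  -- derivative of g
  have hgD : ∀ t, t0 ≤ t → HasDerivAt g (⟪G t, deriv x t⟫_ℝ) t := by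
    intro t ht
    have hc : HasDerivAt (fun s => f (x s)) (fderiv ℝ f (x t) (deriv x t)) t :=
      (hfd (x t)).hasFDerivAt.comp_hasDerivAt t (hxD t ht)
    have h2 := hc.sub_const (f xstar)
    rw [hgdef, hGdef]
    simpa [inner_grad_eq] using h2
  -- derivative of EE
  have hEED : ∀ t, t0 ≤ t → HasDerivAt EE (EE' t) t := by
    intro t ht
    have hq : HasDerivAt (fun s : ℝ => s * (s - β)) (1 * (t - β) + t * 1) t :=
      (hasDerivAt_id t).mul ((hasDerivAt_id t).sub_const β)
    have h1 := hq.mul (hgD t ht)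
    have h2 : HasDerivAt (fun s => ⟪V s, V s⟫_ℝ)
        (⟪V t, V' t⟫_ℝ + ⟪V' t, V t⟫_ℝ) t :=
      HasDerivAt.inner ℝ (hVD t ht) (hVD t ht)
    have h3 := h1.add (h2.const_mul (1/2 : ℝ))
    have heq : (1 * (t - β) + t * 1) * g t + t * (t - β) * ⟪G t, deriv x t⟫_ℝ
        + 1/2 * (⟪V t, V' t⟫_ℝ + ⟪V' t, V t⟫_ℝ) = EE' t := by
      rw [hEE'def]
      have hc : ⟪V' t, V t⟫_ℝ = ⟪V t, V' t⟫_ℝ := real_inner_comm _ _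
      rw [hc]; ring
    rw [← heq]
    exact h3
  -- continuity facts
  have hxC : ContinuousOn x (Set.Ici t0) :=
    fun t ht => (hx1 t ht).continuousAt.continuousWithinAt
  have hx'C : ContinuousOn (deriv x) (Set.Ici t0) :=
    fun t ht => (hx2 t ht).continuousAt.continuousWithinAt
  have heC : ContinuousOn e (Set.Ici t0) :=
    fun t ht => (he1 t ht).continuousAt.continuousWithinAt
  have hGC : ContinuousOn G (Set.Ici t0) := hgradcont.comp_continuousOn hxC
  have hWC : ContinuousOn W (Set.Ici t0) := heC.add (he2.const_smul β)
  have hVC : ContinuousOn V (Set.Ici t0) :=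
    (continuousOn_const.smul (hxC.sub continuousOn_const)).add
      ((continuous_id.continuousOn).smul (hx'C.add (continuousOn_const.smul hGC)))
  have hV'C : ContinuousOn V' (Set.Ici t0) :=
    ((((continuous_id.continuousOn).sub continuousOn_const).neg).smul hGC).sub
      ((continuous_id.continuousOn).smul hWC)
  have hgC : ContinuousOn g (Set.Ici t0) :=
    (hfd.continuous.comp_continuousOn hxC).sub continuousOn_const
  have hEE'C : ContinuousOn EE' (Set.Ici t0) := by
    apply ContinuousOn.add
    · exact (((continuous_const.mul continuous_id).sub continuous_const).continuousOn.mul hgC).add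
        (((continuous_id.mul (continuous_id.sub continuous_const)).continuousOn).mul
          (hGC.inner hx'C))
    · exact hVC.inner hV'C
  have hEEC : ContinuousOn EE (Set.Ici t0) :=
    (((continuous_id.mul (continuous_id.sub continuous_const)).continuousOn).mul hgC).add
      (continuousOn_const.mul (hVC.inner hVC))
  have hhhC : ContinuousOn hh (Set.Ici t0) := (continuous_id.continuousOn).mul hWC.norm
  -- the threshold t1
  set t1 : ℝ := max t0 (max β ((α-2)*β/(α-3))) with ht1def
  have ht1t0 : t0 ≤ t1 := le_max_left _ _
  have ht1pos : 0 < t1 := lt_of_lt_of_le ht0 ht1t0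
  have hβt1 : β ≤ t1 := le_trans (le_max_left _ _) (le_max_right _ _)
  have hαm3 : (0:ℝ) < α - 3 := by linarith
  have hcoef : ∀ t, t1 ≤ t → (3-α)*t + (α-2)*β ≤ 0 := by
    intro t ht
    have h1 : (α-2)*β/(α-3) ≤ t :=
      le_trans (le_trans (le_max_right _ _) (le_max_right _ _)) ht
    rw [div_le_iff₀ hαm3] at h1
    nlinarith
  -- convexity inequality
  have hcvx : ∀ t, g t ≤ ⟪x t - xstar, G t⟫_ℝ := by
    intro t
    have h := convex_grad_ineq hconv (hfd (x t)) xstar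
    have h2 : ⟪G t, xstar - x t⟫_ℝ ≤ f xstar - f (x t) := h
    have h3 : ⟪G t, xstar - x t⟫_ℝ = -⟪x t - xstar, G t⟫_ℝ := by
      rw [real_inner_comm]
      rw [show xstar - x t = -(x t - xstar) by abel, inner_neg_left]
    rw [h3] at h2
    simp only [hgdef]
    linarith
  -- nonnegativity of EE and the norm bound
  have hEE0 : ∀ t, t1 ≤ t → 0 ≤ EE t := by
    intro t ht
    have h1 : 0 ≤ t * (t - β) * g t :=
      mul_nonneg (mul_nonneg (le_of_lt (lt_of_lt_of_le ht1pos ht)) (by linarith [hβt1])) (hg0 t)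
    have h2 : (0:ℝ) ≤ ⟪V t, V t⟫_ℝ := real_inner_self_nonneg
    simp only [hEEdef]
    exact add_nonneg h1 (mul_nonneg (by norm_num) h2)
  have hVle : ∀ t, t1 ≤ t → ‖V t‖ ≤ Real.sqrt (2 * EE t + 1) := by
    intro t ht
    have h1 : 0 ≤ t * (t - β) * g t :=
      mul_nonneg (mul_nonneg (le_of_lt (lt_of_lt_of_le ht1pos ht)) (by linarith [hβt1])) (hg0 t)
    have h2 : ‖V t‖^2 ≤ 2 * EE t + 1 := by
      have hin : ⟪V t, V t⟫_ℝ = ‖V t‖^2 := real_inner_self_eq_norm_sq (V t)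
      have heq : 2 * EE t + 1 = 2*(t*(t-β)*g t) + ‖V t‖^2 + 1 := by
        simp only [hEEdef]; rw [← hin]; ring
      rw [heq]
      linarith
    calc ‖V t‖ = Real.sqrt (‖V t‖^2) := (Real.sqrt_sq (norm_nonneg _)).symm
    _ ≤ Real.sqrt (2 * EE t + 1) := Real.sqrt_le_sqrt h2
  -- the key differential inequality
  have hkey : ∀ t, t1 ≤ t → EE' t ≤ Real.sqrt (2 * EE t + 1) * hh t := by
    intro t ht
    have ht0t : t0 ≤ t := le_trans ht1t0 ht
    have htpos : (0:ℝ) < t := lt_of_lt_of_le ht1pos ht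
    have htβ : β ≤ t := le_trans hβt1 ht
    have hVG : ⟪V t, G t⟫_ℝ = (α-1)*⟪x t - xstar, G t⟫_ℝ
        + t*⟪deriv x t, G t⟫_ℝ + t*β*⟪G t, G t⟫_ℝ := by
      simp only [hVdef]
      simp only [inner_add_left, real_inner_smul_left]
      ring
    have hVV' : ⟪V t, V' t⟫_ℝ = -(t-β)*⟪V t, G t⟫_ℝ - t*⟪V t, W t⟫_ℝ := by
      simp only [hV'def]
      rw [inner_sub_right, real_inner_smul_right, real_inner_smul_right]
    have e1 : EE' t = ((2*t-β)*g t - (t-β)*(α-1)*⟪x t - xstar, G t⟫_ℝ)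
        - t*(t-β)*β*⟪G t, G t⟫_ℝ - t*⟪V t, W t⟫_ℝ := by
      simp only [hEE'def]
      rw [hVV', hVG, real_inner_comm (G t) (deriv x t)]
      ring
    have c1 : (0:ℝ) ≤ (t-β)*(α-1) := mul_nonneg (by linarith) (by linarith)
    have e2 : (2*t-β)*g t - (t-β)*(α-1)*⟪x t - xstar, G t⟫_ℝ ≤ 0 := by
      have h4 := mul_le_mul_of_nonneg_left (hcvx t) c1
      have h5 : ((3-α)*t + (α-2)*β) * g t ≤ 0 :=
        mul_nonpos_of_nonpos_of_nonneg (hcoef t ht) (hg0 t)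
      nlinarith [h4, h5]
    have e3 : (0:ℝ) ≤ t*(t-β)*β*⟪G t, G t⟫_ℝ := by
      have : (0:ℝ) ≤ ⟪G t, G t⟫_ℝ := real_inner_self_nonneg
      have h6 : (0:ℝ) ≤ t*(t-β)*β :=
        mul_nonneg (mul_nonneg (le_of_lt htpos) (by linarith)) (le_of_lt hβ)
      exact mul_nonneg h6 this
    have e4 : -⟪V t, W t⟫_ℝ ≤ ‖V t‖ * ‖W t‖ := by
      have := abs_real_inner_le_norm (V t) (W t)
      have h7 := neg_abs_le (⟪V t, W t⟫_ℝ)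
      linarith
    have e5 : t * (‖V t‖ * ‖W t‖) ≤ Real.sqrt (2*EE t + 1) * (t * ‖W t‖) := by
      have h8 := hVle t ht
      have h9 : 0 ≤ t * ‖W t‖ := mul_nonneg (le_of_lt htpos) (norm_nonneg _)
      calc t * (‖V t‖ * ‖W t‖) = ‖V t‖ * (t * ‖W t‖) := by ring
      _ ≤ Real.sqrt (2*EE t + 1) * (t * ‖W t‖) := mul_le_mul_of_nonneg_right h8 h9
    have e6 : -(t*⟪V t, W t⟫_ℝ) ≤ t * (‖V t‖ * ‖W t‖) := by
      have := mul_le_mul_of_nonneg_left e4 (le_of_lt htpos)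
      linarith [this]
    simp only [hhhdef]
    linarith [e1, e2, e3, e5, e6]
  -- positivity of 2*EE+1 and derivative of sqrt(2*EE+1)
  have hEpos : ∀ t, t1 ≤ t → (0:ℝ) < 2 * EE t + 1 := fun t ht => by linarith [hEE0 t ht]
  have hphiD : ∀ t, t1 ≤ t →
      HasDerivAt (fun s => Real.sqrt (2 * EE s + 1)) (EE' t / Real.sqrt (2 * EE t + 1)) t := by
    intro t ht
    have h1 : HasDerivAt (fun s => 2 * EE s + 1) (2 * EE' t) t :=
      ((hEED t (le_trans ht1t0 ht)).const_mul 2).add_const 1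
    have h2 := (Real.hasDerivAt_sqrt (ne_of_gt (hEpos t ht))).comp t h1
    have hsq : (0:ℝ) < Real.sqrt (2 * EE t + 1) := Real.sqrt_pos.2 (hEpos t ht)
    convert h2 using 1
    show EE' t / Real.sqrt (2 * EE t + 1)
        = 1 / (2 * Real.sqrt (2 * EE t + 1)) * (2 * EE' t)
    rw [mul_comm (1 / (2 * Real.sqrt (2 * EE t + 1))) (2 * EE' t), mul_one_div,
      mul_div_mul_left _ _ (by norm_num : (2:ℝ) ≠ 0)]
    all_goals rfl
  -- integrability of hh
  have hWbound : ∀ᵐ s ∂(volume.restrict (Set.Ici t0)),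
      ‖hh s‖ ≤ (fun s => s * ‖e s‖ + β * (s * ‖deriv e s‖)) s := by
    rw [ae_restrict_iff' measurableSet_Ici]
    filter_upwards with s hs
    have hspos : (0:ℝ) < s := lt_of_lt_of_le ht0 hs
    simp only [hhhdef, hWdef]
    have h1 : ‖e s + β • deriv e s‖ ≤ ‖e s‖ + β * ‖deriv e s‖ := by
      calc ‖e s + β • deriv e s‖ ≤ ‖e s‖ + ‖β • deriv e s‖ := norm_add_le _ _
      _ = ‖e s‖ + β * ‖deriv e s‖ := by
        rw [norm_smul, Real.norm_eq_abs, abs_of_pos hβ]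
    have h2 : ‖s * ‖e s + β • deriv e s‖‖ = s * ‖e s + β • deriv e s‖ := by
      rw [Real.norm_eq_abs, abs_of_nonneg (mul_nonneg (le_of_lt hspos) (norm_nonneg _))]
    rw [h2]
    calc s * ‖e s + β • deriv e s‖ ≤ s * (‖e s‖ + β * ‖deriv e s‖) :=
      mul_le_mul_of_nonneg_left h1 (le_of_lt hspos)
    _ = s * ‖e s‖ + β * (s * ‖deriv e s‖) := by ring
  have hhint : IntegrableOn hh (Set.Ici t0) :=
    Integrable.mono' (heint.add (heint'.const_mul β))
      (hhhC.aestronglyMeasurable measurableSet_Ici) hWbound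
  have hhint1 : IntegrableOn hh (Set.Ici t1) := hhint.mono_set (Set.Ici_subset_Ici.2 ht1t0)
  have hh0 : ∀ s ∈ Set.Ici t1, 0 ≤ hh s := fun s hs =>
    mul_nonneg (le_trans (le_of_lt ht1pos) hs) (norm_nonneg _)
  set I : ℝ := ∫ s in Set.Ici t1, hh s with hIdef
  have hI0 : 0 ≤ I := setIntegral_nonneg measurableSet_Ici hh0
  set C1 : ℝ := Real.sqrt (2 * EE t1 + 1) + I with hC1def
  -- Gronwall-type bound
  have hgron : ∀ t, t1 ≤ t → Real.sqrt (2 * EE t + 1) ≤ C1 := by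
    intro t ht
    have hsub : Set.uIcc t1 t = Set.Icc t1 t := Set.uIcc_of_le ht
    have hsubI : Set.Icc t1 t ⊆ Set.Ici t0 := fun s hs => le_trans ht1t0 hs.1
    have hq : ContinuousOn (fun s => 2 * EE s + 1) (Set.Icc t1 t) :=
      (continuousOn_const.mul (hEEC.mono hsubI)).add continuousOn_const
    have hphiint : IntervalIntegrable (fun s => EE' s / Real.sqrt (2 * EE s + 1)) volume t1 t := by
      apply ContinuousOn.intervalIntegrable
      rw [hsub]
      exact (hEE'C.mono hsubI).div (Real.continuous_sqrt.comp_continuousOn hq)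
        (fun s hs => ne_of_gt (Real.sqrt_pos.2 (hEpos s hs.1)))
    have hhint2 : IntervalIntegrable hh volume t1 t := by
      apply ContinuousOn.intervalIntegrable
      rw [hsub]
      exact hhhC.mono hsubI
    have hFTC : ∫ s in t1..t, EE' s / Real.sqrt (2 * EE s + 1)
        = Real.sqrt (2 * EE t + 1) - Real.sqrt (2 * EE t1 + 1) :=
      intervalIntegral.integral_eq_sub_of_hasDerivAt
        (fun s hs => hphiD s (by rw [hsub] at hs; exact hs.1)) hphiint
    have hmono : ∫ s in t1..t, EE' s / Real.sqrt (2 * EE s + 1) ≤ ∫ s in t1..t, hh s := by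
      apply intervalIntegral.integral_mono_on ht hphiint hhint2
      intro s hs
      rw [div_le_iff₀ (Real.sqrt_pos.2 (hEpos s hs.1))]
      calc EE' s ≤ Real.sqrt (2 * EE s + 1) * hh s := hkey s hs.1
      _ = hh s * Real.sqrt (2 * EE s + 1) := by ring
    have htail : ∫ s in t1..t, hh s ≤ I := by
      rw [intervalIntegral.integral_of_le ht]
      apply setIntegral_mono_set hhint1
      · exact (ae_restrict_iff' measurableSet_Ici).2 (Filter.Eventually.of_forall hh0)
      · exact HasSubset.Subset.eventuallyLE (Set.Ioc_subset_Icc_self.trans (Set.Icc_subset_Ici_self))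
    rw [hC1def]
    linarith [hFTC, hmono, htail]
  have hV1 : ∀ t, t1 ≤ t → ‖V t‖ ≤ C1 := fun t ht => le_trans (hVle t ht) (hgron t ht)
  -- compact piece
  obtain ⟨C2, hC2⟩ := (isCompact_Icc : IsCompact (Set.Icc t0 t1)).exists_bound_of_continuousOn
    (hVC.mono (fun s hs => hs.1))
  set M : ℝ := max C1 C2 with hMdef
  have hVbound : ∀ t, t0 ≤ t → ‖V t‖ ≤ M := by
    intro t ht
    rcases le_total t t1 with h | h
    · exact le_trans (hC2 t ⟨ht, h⟩) (le_max_right _ _)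
    · exact le_trans (hV1 t h) (le_max_left _ _)
  have hM0 : 0 ≤ M := le_trans (norm_nonneg (V t0)) (hVbound t0 le_rfl)
  constructor
  · refine ⟨M, fun t ht => ?_⟩
    have h := hVbound t ht
    simp only [hVdef, hGdef] at h
    exact h
  -- trajectory bound
  set q : ℝ → ℝ := fun s => ⟪x s - xstar, x s - xstar⟫_ℝ with hqdef
  set D : ℝ → ℝ := fun s =>
    q s + s * (⟪x s - xstar, deriv x s⟫_ℝ + ⟪deriv x s, x s - xstar⟫_ℝ) with hDdef
  have hq0 : ∀ t, 0 ≤ q t := fun t => real_inner_self_nonneg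
  have hqD : ∀ t, t0 ≤ t → HasDerivAt q
      (⟪x t - xstar, deriv x t⟫_ℝ + ⟪deriv x t, x t - xstar⟫_ℝ) t := by
    intro t ht
    exact HasDerivAt.inner ℝ ((hxD t ht).sub_const xstar) ((hxD t ht).sub_const xstar)
  have hpsiD : ∀ t, t0 ≤ t → HasDerivAt (fun s => s * q s) (D t) t := by
    intro t ht
    have h := (hasDerivAt_id t).mul (hqD t ht)
    have : (1:ℝ) * q t + t * (⟪x t - xstar, deriv x t⟫_ℝ + ⟪deriv x t, x t - xstar⟫_ℝ)
        = D t := by rw [hDdef]; ring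
    rw [← this]
    exact h
  have hDle : ∀ t, t0 ≤ t → D t ≤ M^2 := by
    intro t ht
    have htpos : (0:ℝ) < t := lt_of_lt_of_le ht0 ht
    have hxv : ⟪x t - xstar, V t⟫_ℝ = (α-1) * q t + t * ⟪x t - xstar, deriv x t⟫_ℝ
        + t * β * ⟪x t - xstar, G t⟫_ℝ := by
      simp only [hVdef, hqdef]
      simp only [inner_add_right, real_inner_smul_right]
      ring
    have hcs : ⟪x t - xstar, V t⟫_ℝ ≤ ‖x t - xstar‖ * M := by
      calc ⟪x t - xstar, V t⟫_ℝ ≤ ‖x t - xstar‖ * ‖V t‖ := real_inner_le_norm _ _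
      _ ≤ ‖x t - xstar‖ * M := mul_le_mul_of_nonneg_left (hVbound t ht) (norm_nonneg _)
    have hxG2 : 0 ≤ ⟪x t - xstar, G t⟫_ℝ := le_trans (hg0 t) (hcvx t)
    have hqnorm : q t = ‖x t - xstar‖^2 := real_inner_self_eq_norm_sq _
    have hsymm : ⟪deriv x t, x t - xstar⟫_ℝ = ⟪x t - xstar, deriv x t⟫_ℝ := real_inner_comm _ _
    have htβG : 0 ≤ t * β * ⟪x t - xstar, G t⟫_ℝ :=
      mul_nonneg (mul_nonneg (le_of_lt htpos) (le_of_lt hβ)) hxG2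
    have hα4 : 0 ≤ (2*α - 4) * q t := mul_nonneg (by linarith) (hq0 t)
    rw [hDdef]
    simp only
    rw [hsymm]
    nlinarith [hcs, hxv, hqnorm, sq_nonneg (M - ‖x t - xstar‖), htβG, hα4]
  have hDC : ContinuousOn D (Set.Ici t0) := by
    apply ContinuousOn.add
    · exact (hxC.sub continuousOn_const).inner (hxC.sub continuousOn_const)
    · exact (continuous_id.continuousOn).mul
        (((hxC.sub continuousOn_const).inner hx'C).add
          (hx'C.inner (hxC.sub continuousOn_const)))
  have hpsibound : ∀ t, t0 ≤ t → t * q t ≤ t0 * q t0 + M^2 * (t - t0) := by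
    intro t ht
    have hsub : Set.uIcc t0 t = Set.Icc t0 t := Set.uIcc_of_le ht
    have hint1 : IntervalIntegrable D volume t0 t := by
      apply ContinuousOn.intervalIntegrable
      rw [hsub]
      exact hDC.mono (fun s hs => hs.1)
    have hFTC2 : ∫ s in t0..t, D s = t * q t - t0 * q t0 :=
      intervalIntegral.integral_eq_sub_of_hasDerivAt
        (fun s hs => hpsiD s (by rw [hsub] at hs; exact hs.1)) hint1
    have hmono2 : ∫ s in t0..t, D s ≤ ∫ s in t0..t, (M^2 : ℝ) :=
      intervalIntegral.integral_mono_on ht hint1 intervalIntegrable_const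
        (fun s hs => hDle s hs.1)
    have hconst : ∫ s in t0..t, (M^2 : ℝ) = (t - t0) * M^2 := by
      rw [intervalIntegral.integral_const]; simp
    rw [hconst] at hmono2
    nlinarith [hFTC2, hmono2]
  refine ⟨‖xstar‖ + Real.sqrt (q t0 + M^2), fun t ht => ?_⟩
  have htpos : (0:ℝ) < t := lt_of_lt_of_le ht0 ht
  have h1 : q t ≤ q t0 + M^2 := by
    have h2 := hpsibound t ht
    have e1 : t0 * q t0 ≤ t * q t0 := mul_le_mul_of_nonneg_right ht (hq0 t0)
    have e2 : (0:ℝ) ≤ M^2 * t0 := mul_nonneg (sq_nonneg M) (le_of_lt ht0)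
    have h3 : t * q t ≤ t * (q t0 + M^2) := by nlinarith
    exact le_of_mul_le_mul_left h3 htpos
  have h4 : ‖x t - xstar‖ ≤ Real.sqrt (q t0 + M^2) := by
    rw [show q t = ‖x t - xstar‖^2 from real_inner_self_eq_norm_sq _] at h1
    calc ‖x t - xstar‖ = Real.sqrt (‖x t - xstar‖^2) := (Real.sqrt_sq (norm_nonneg _)).symm
    _ ≤ Real.sqrt (q t0 + M^2) := Real.sqrt_le_sqrt h1
  calc ‖x t‖ = ‖xstar + (x t - xstar)‖ := by rw [add_sub_cancel]
  _ ≤ ‖xstar‖ + ‖x t - xstar‖ := norm_add_le _ _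
  _ ≤ ‖xstar‖ + Real.sqrt (q t0 + M^2) := by linarith
end

section
/- Let t0 > 0, let f : [t0,∞) → ℝ be continuous and integrable on [t0,∞), and let φ : [t0,∞) → [0,∞) be nondecreasing with φ(t) → +∞ as t → ∞. Then (1/φ(t)) ∫_{t0}^t φ(s) f(s) ds → 0 as t → ∞. -/
open MeasureTheory Filter
open Set Function

lemma kron_key {ψ fe : ℝ → ℝ} (hψ : Monotone ψ) (hψ0 : ∀ x, 0 ≤ ψ x)
    (hfe : Continuous fe) {T t : ℝ} (hTt : T ≤ t) {ε : ℝ} (hε : 0 ≤ ε)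
    (htail : ∀ u v, T ≤ u → u ≤ v → v ≤ t → |∫ s in u..v, fe s| ≤ ε) :
    |∫ s in T..t, ψ s * fe s| ≤ ε * rightLim ψ T + ε * ψ t := by
  classical
  set G := hψ.stieltjesFunction with hG
  have hGval : ∀ x, G x = rightLim ψ x := fun _ => rfl
  set μ := G.measure with hμ
  set lam := volume.restrict (Ioc T t) with hlam
  set ν := μ.restrict (Ioo T t) with hν
  obtain ⟨M, hM⟩ : ∃ M, ∀ s ∈ Icc T t, ‖fe s‖ ≤ M :=
    isCompact_Icc.exists_bound_of_continuousOn hfe.continuousOn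
  haveI : IsFiniteMeasure lam := by
    constructor
    rw [hlam, Measure.restrict_apply_univ]
    exact measure_Ioc_lt_top
  haveI : IsFiniteMeasure ν := by
    constructor
    rw [hν, Measure.restrict_apply_univ]
    exact (measure_mono Ioo_subset_Ioc_self).trans_lt measure_Ioc_lt_top
  -- the kernel function
  set H : ℝ → ℝ → ℝ := fun s u => if u ≤ s then fe s else 0 with hH
  have hHmeas : Measurable (uncurry H) := by
    apply Measurable.ite (measurableSet_le measurable_snd measurable_fst)
    · exact hfe.measurable.comp measurable_fst
    · exact measurable_const
  have hHint : Integrable (uncurry H) (lam.prod ν) := by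
    refine ⟨hHmeas.aestronglyMeasurable, ?_⟩
    apply HasFiniteIntegral.mono' (g := fun _ => |M|) (hasFiniteIntegral_const _)
    rw [hlam, hν, Measure.prod_restrict]
    filter_upwards [ae_restrict_mem (measurableSet_Ioc.prod measurableSet_Ioo)] with p hp
    rcases le_or_gt p.2 p.1 with h | h
    · simp only [uncurry, hH, if_pos h]
      exact (hM p.1 ⟨hp.1.1.le, hp.1.2⟩).trans (le_abs_self M)
    · simp only [uncurry, hH, if_neg (not_le.2 h)]
      simpa using abs_nonneg M
  -- integrability facts on `lam`
  have hfe_int : IntegrableOn fe (Ioc T t) volume := hfe.integrableOn_Ioc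
  have hψmeas : Measurable ψ := hψ.measurable
  have haux_int : IntegrableOn (fun s => (ψ s - G T) * fe s) (Ioc T t) volume := by
    refine ⟨((hψmeas.sub measurable_const).mul hfe.measurable).aestronglyMeasurable, ?_⟩
    apply HasFiniteIntegral.mono' (g := fun _ => (ψ t + |G T|) * |M|) (hasFiniteIntegral_const _)
    filter_upwards [ae_restrict_mem measurableSet_Ioc] with s hs
    rw [Real.norm_eq_abs, abs_mul]
    have h1 : |ψ s - G T| ≤ ψ t + |G T| := by
      have := abs_sub_abs_le_abs_sub (ψ s) (G T)
      have h2 : |ψ s| ≤ ψ t := by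
        rw [abs_of_nonneg (hψ0 s)]; exact hψ (hs.2)
      calc |ψ s - G T| ≤ |ψ s| + |G T| := abs_sub (ψ s) (G T)
        _ ≤ ψ t + |G T| := by linarith
    refine mul_le_mul h1 (((hM s ⟨hs.1.le, hs.2⟩).trans (le_abs_self M))) (abs_nonneg _) ?_
    have := hψ0 t; positivity
  -- split the integral
  have hsplit : ∫ s in T..t, ψ s * fe s
      = G T * (∫ s in T..t, fe s) + ∫ s in Ioc T t, (ψ s - G T) * fe s := by
    rw [intervalIntegral.integral_of_le hTt, intervalIntegral.integral_of_le hTt,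
      ← integral_const_mul, ← integral_add (hfe_int.mul_const (G T) |>.const_mul (G T) |> fun _ => (hfe_int.const_mul (G T))) haux_int]
    · congr 1; ext s; ring
  -- replace ψ by its right-continuous modification G (a.e. equality)
  have hD : volume {x : ℝ | ψ x ≠ rightLim ψ x} = 0 := by
    apply Set.Countable.measure_zero
    apply hψ.countable_not_continuousAt.mono
    intro x hx hcont
    exact hx ((hψ.continuousWithinAt_Ioi_iff_rightLim_eq.1 hcont.continuousWithinAt).symm)
  have stepA : ∫ s in Ioc T t, (ψ s - G T) * fe s = ∫ s in Ioc T t, (G s - G T) * fe s := by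
    apply setIntegral_congr_ae measurableSet_Ioc
    have : ∀ᵐ x : ℝ, ψ x = rightLim ψ x := by
      rw [ae_iff]; exact hD
    filter_upwards [this] with s hs _
    rw [hGval s, ← hs]
  have stepB : ∫ s in Ioc T t, (G s - G T) * fe s
      = ∫ s in Ioc T t, (ν (Iic s)).toReal * fe s := by
    apply setIntegral_congr_ae measurableSet_Ioc
    have hnt : ∀ᵐ x : ℝ, x ≠ t := by
      rw [ae_iff]; simpa using volume_singleton
    filter_upwards [hnt] with s hst hs
    have hslt : s < t := lt_of_le_of_ne hs.2 hst
    have hset : Iic s ∩ Ioo T t = Ioc T s := by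
      ext u; constructor
      · rintro ⟨h1, h2, _⟩; exact ⟨h2, h1⟩
      · rintro ⟨h1, h2⟩; exact ⟨h2, h1, lt_of_le_of_lt h2 hslt⟩
    rw [hν, Measure.restrict_apply measurableSet_Iic, hset, hμ,
      StieltjesFunction.measure_Ioc, ENNReal.toReal_ofReal]
    exact sub_nonneg.2 (G.mono (hs.1.le.trans (le_refl s)))
  have stepC : ∫ s in Ioc T t, (ν (Iic s)).toReal * fe s
      = ∫ s in Ioc T t, ∫ u, H s u ∂ν := by
    apply setIntegral_congr_fun measurableSet_Ioc
    intro s _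
    have : (fun u => H s u) = (Iic s).indicator (fun _ => fe s) := by
      ext u
      by_cases h : u ≤ s
      · simp [hH, h, Set.indicator_of_mem (Set.mem_Iic.2 h)]
      · simp [hH, h, Set.indicator_of_notMem (fun hm => h (Set.mem_Iic.1 hm))]
    show (ν (Iic s)).toReal * fe s = ∫ u, H s u ∂ν
    rw [show (fun u => H s u) = (Iic s).indicator (fun _ => fe s) from this,
      integral_indicator measurableSet_Iic, setIntegral_const, smul_eq_mul]
    rfl
  -- Fubini
  have hswap : ∫ s in Ioc T t, ∫ u, H s u ∂ν = ∫ u, ∫ s, H s u ∂lam ∂ν := by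
    rw [hlam]
    exact integral_integral_swap hHint
  -- inner integral after swapping is a tail integral of fe
  have hinner : ∀ u ∈ Ioo T t, ∫ s, H s u ∂lam = ∫ s in u..t, fe s := by
    intro u hu
    have : (fun s => H s u) = (Ici u).indicator fe := by
      ext s
      by_cases h : u ≤ s
      · simp [hH, h, Set.indicator_of_mem (Set.mem_Ici.2 h)]
      · simp [hH, h, Set.indicator_of_notMem (fun hm => h (Set.mem_Ici.1 hm))]
    rw [show (fun s => H s u) = (Ici u).indicator fe from this,
      integral_indicator measurableSet_Ici, hlam,
      Measure.restrict_restrict measurableSet_Ici]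
    have hset : Ici u ∩ Ioc T t = Icc u t := by
      ext s; constructor
      · rintro ⟨h1, _, h3⟩; exact ⟨h1, h3⟩
      · rintro ⟨h1, h2⟩; exact ⟨h1, lt_of_lt_of_le hu.1 h1, h2⟩
    rw [hset, intervalIntegral.integral_of_le hu.2.le, integral_Icc_eq_integral_Ioc]
  -- bound the swapped integral
  have hbound : |∫ u, ∫ s, H s u ∂lam ∂ν| ≤ ε * (ν univ).toReal := by
    rw [← Real.norm_eq_abs]
    apply norm_integral_le_of_norm_le_const
    filter_upwards [ae_restrict_mem measurableSet_Ioo] with u hu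
    rw [hinner u hu, Real.norm_eq_abs]
    exact htail u t hu.1.le hu.2.le le_rfl
  -- the total mass of ν is at most ψ t
  have hνuniv : (ν univ).toReal ≤ ψ t := by
    have h1 : ν univ = ENNReal.ofReal (leftLim G t - G T) := by
      rw [hν, Measure.restrict_apply_univ, hμ, StieltjesFunction.measure_Ioo]
    have h2 : leftLim (⇑G) t ≤ ψ t := by
      apply le_of_tendsto (G.mono.tendsto_leftLim t)
      filter_upwards [self_mem_nhdsWithin] with s hs
      rw [hGval s]
      exact hψ.rightLim_le hs
    have h3 : (0:ℝ) ≤ G T := (hψ0 T).trans (hψ.le_rightLim le_rfl)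
    rw [h1]
    rcases le_total (leftLim (⇑G) t - G T) 0 with h | h
    · rw [ENNReal.ofReal_eq_zero.2 h]; simpa using hψ0 t
    · rw [ENNReal.toReal_ofReal h]; linarith
  -- put everything together
  have hGT0 : (0:ℝ) ≤ G T := (hψ0 T).trans (hψ.le_rightLim le_rfl)
  calc |∫ s in T..t, ψ s * fe s|
      ≤ |G T * ∫ s in T..t, fe s| + |∫ s in Ioc T t, (ψ s - G T) * fe s| := by
        rw [hsplit]; exact abs_add_le _ _
    _ ≤ G T * ε + ε * ψ t := by
        apply add_le_add
        · rw [abs_mul, abs_of_nonneg hGT0]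
          exact mul_le_mul_of_nonneg_left (htail T t le_rfl hTt le_rfl) hGT0
        · rw [stepA, stepB, stepC, hswap]
          exact hbound.trans (mul_le_mul_of_nonneg_left hνuniv hε)
    _ = ε * rightLim ψ T + ε * ψ t := by rw [← hGval T]; ring

/-- Continuous-time Kronecker lemma: if `f` is continuous and integrable on `[t0, ∞)` and
`φ` is nonnegative, nondecreasing and tends to `+∞`, then
`(1/φ(t)) ∫_{t0}^t φ(s) f(s) ds → 0` as `t → ∞`. -/
theorem kronecker_continuous (t0 : ℝ) (f φ : ℝ → ℝ)
    (ht0 : 0 < t0)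
    (hfc : ContinuousOn f (Set.Ici t0))
    (hfint : IntegrableOn f (Set.Ici t0))
    (hφ0 : ∀ t, t0 ≤ t → 0 ≤ φ t)
    (hφmono : MonotoneOn φ (Set.Ici t0))
    (hφtop : Tendsto φ atTop atTop) :
    Tendsto (fun t => (φ t)⁻¹ * ∫ s in t0..t, φ s * f s) atTop (nhds 0) := by
  -- global modifications of φ and f
  set ψ : ℝ → ℝ := fun s => φ (max s t0) with hψdef
  set fe : ℝ → ℝ := fun s => f (max s t0) with hfedef
  have hψmono : Monotone ψ := fun a b hab =>
    hφmono (le_max_right a t0) (le_max_right b t0) (max_le_max hab le_rfl)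
  have hψ0 : ∀ x, 0 ≤ ψ x := fun x => hφ0 _ (le_max_right x t0)
  have hψeq : ∀ s, t0 ≤ s → ψ s = φ s := fun s hs => by
    simp [hψdef, max_eq_left hs]
  have hfecont : Continuous fe :=
    hfc.comp_continuous (continuous_id.max continuous_const) (fun x => le_max_right x t0)
  have hfeeq : ∀ s, t0 ≤ s → fe s = f s := fun s hs => by
    simp [hfedef, max_eq_left hs]
  -- interval integrability of φ * f on [a, b] ⊆ [t0, ∞)
  have hint : ∀ a b, t0 ≤ a → a ≤ b →
      IntervalIntegrable (fun s => φ s * f s) volume a b := by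
    intro a b ha hab
    rw [intervalIntegrable_iff_integrableOn_Ioc_of_le hab]
    have hbase : IntegrableOn (fun s => ψ s * fe s) (Ioc a b) volume := by
      obtain ⟨M, hM⟩ : ∃ M, ∀ s ∈ Icc a b, ‖fe s‖ ≤ M :=
        isCompact_Icc.exists_bound_of_continuousOn hfecont.continuousOn
      refine ⟨((hψmono.measurable).mul hfecont.measurable).aestronglyMeasurable, ?_⟩
      apply HasFiniteIntegral.mono' (g := fun _ => ψ b * |M|) (hasFiniteIntegral_const _)
      filter_upwards [ae_restrict_mem measurableSet_Ioc] with s hs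
      rw [Real.norm_eq_abs, abs_mul, abs_of_nonneg (hψ0 s)]
      exact mul_le_mul (hψmono hs.2) ((hM s ⟨hs.1.le, hs.2⟩).trans (le_abs_self M))
        (abs_nonneg _) (hψ0 b)
    apply hbase.congr_fun ?_ measurableSet_Ioc
    intro s hs
    show ψ s * fe s = φ s * f s
    rw [hψeq s (ha.trans hs.1.le), hfeeq s (ha.trans hs.1.le)]
  -- tail estimates for f
  set I := ∫ s in Ioi t0, |f s| with hI
  have habs_int : IntegrableOn (fun s => |f s|) (Ioi t0) volume :=
    (IntegrableOn.mono_set hfint.norm Ioi_subset_Ici_self).congr_fun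
      (fun s _ => (Real.norm_eq_abs (f s))) measurableSet_Ioi
  have htendI : Tendsto (fun u => ∫ s in t0..u, |f s|) atTop (nhds I) :=
    intervalIntegral_tendsto_integral_Ioi t0 habs_int tendsto_id
  rw [NormedAddCommGroup.tendsto_nhds_zero]
  intro ε hε
  set δ := ε / 4 with hδ
  have hδ0 : 0 < δ := by positivity
  -- choose T with small tail
  obtain ⟨T, hTt0, hTclose⟩ : ∃ T, t0 ≤ T ∧ I - δ ≤ ∫ s in t0..T, |f s| := by
    have h1 : ∀ᶠ u in atTop, I - δ ≤ ∫ s in t0..u, |f s| :=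
      htendI.eventually (eventually_ge_nhds (by linarith))
    obtain ⟨T, hT⟩ := (h1.and (eventually_ge_atTop t0)).exists
    exact ⟨T, hT.2, hT.1⟩
  have htail0 : ∫ s in Ioi T, |f s| ≤ δ := by
    have hsplitI : I = (∫ s in Ioc t0 T, |f s|) + ∫ s in Ioi T, |f s| := by
      rw [hI, ← setIntegral_union (Ioc_disjoint_Ioi le_rfl) measurableSet_Ioi
        (habs_int.mono_set Ioc_subset_Ioi_self) (habs_int.mono_set (Ioi_subset_Ioi hTt0)),
        Ioc_union_Ioi_eq_Ioi hTt0]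
    have : ∫ s in t0..T, |f s| = ∫ s in Ioc t0 T, |f s| :=
      intervalIntegral.integral_of_le hTt0
    rw [this] at hTclose
    linarith [hsplitI]
  have htail : ∀ u v, T ≤ u → u ≤ v → |∫ s in u..v, f s| ≤ δ := by
    intro u v hu huv
    have h1 : |∫ s in u..v, f s| ≤ ∫ s in u..v, |f s| := by
      have := intervalIntegral.norm_integral_le_integral_norm (f := f) (μ := volume) huv
      simpa [Real.norm_eq_abs] using this
    have h2 : ∫ s in u..v, |f s| ≤ ∫ s in Ioi T, |f s| := by
      rw [intervalIntegral.integral_of_le huv]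
      apply setIntegral_mono_set (habs_int.mono_set (Ioi_subset_Ioi hTt0))
      · filter_upwards with s using abs_nonneg (f s)
      · filter_upwards with s hs using lt_of_le_of_lt hu hs.1
    linarith
  -- constant part
  set C := |∫ s in t0..T, φ s * f s| + δ * rightLim ψ T with hC
  -- eventual bound
  filter_upwards [eventually_ge_atTop T, hφtop.eventually_ge_atTop (max 1 (C / δ))]
    with t htT hφt
  have ht0t : t0 ≤ t := hTt0.trans htT
  have hφtpos : (0:ℝ) < φ t := lt_of_lt_of_le one_pos (le_trans (le_max_left _ _) hφt)
  -- apply the key lemma on [T, t]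
  have hkey : |∫ s in T..t, φ s * f s| ≤ δ * rightLim ψ T + δ * φ t := by
    have heq : ∫ s in T..t, φ s * f s = ∫ s in T..t, ψ s * fe s := by
      apply intervalIntegral.integral_congr
      intro s hs
      rw [Set.uIcc_of_le htT] at hs
      show φ s * f s = ψ s * fe s
      rw [hψeq s (hTt0.trans hs.1), hfeeq s (hTt0.trans hs.1)]
    have htail' : ∀ u v, T ≤ u → u ≤ v → v ≤ t → |∫ s in u..v, fe s| ≤ δ := by
      intro u v hu huv hvt
      have : ∫ s in u..v, fe s = ∫ s in u..v, f s := by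
        apply intervalIntegral.integral_congr
        intro s hs
        rw [Set.uIcc_of_le huv] at hs
        show fe s = f s
        exact hfeeq s (hTt0.trans (hu.trans hs.1))
      rw [this]
      exact htail u v hu huv
    have := kron_key hψmono hψ0 hfecont htT hδ0.le htail'
    rw [heq]
    rwa [hψeq t ht0t] at this
  -- split [t0, t] = [t0, T] ∪ [T, t]
  have hsplit : ∫ s in t0..t, φ s * f s
      = (∫ s in t0..T, φ s * f s) + ∫ s in T..t, φ s * f s :=
    (intervalIntegral.integral_add_adjacent_intervals (hint t0 T le_rfl hTt0)
      (hint T t hTt0 htT)).symm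
  have habs : |∫ s in t0..t, φ s * f s| ≤ C + δ * φ t := by
    rw [hsplit, hC]
    calc |(∫ s in t0..T, φ s * f s) + ∫ s in T..t, φ s * f s|
        ≤ |∫ s in t0..T, φ s * f s| + |∫ s in T..t, φ s * f s| := abs_add_le _ _
      _ ≤ |∫ s in t0..T, φ s * f s| + (δ * rightLim ψ T + δ * φ t) :=
          add_le_add_right hkey _
      _ = |∫ s in t0..T, φ s * f s| + δ * rightLim ψ T + δ * φ t := by ring
  have hCbound : C ≤ δ * φ t := by
    have h1 : C / δ ≤ φ t := le_trans (le_max_right _ _) hφt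
    calc C = δ * (C / δ) := by field_simp
      _ ≤ δ * φ t := mul_le_mul_of_nonneg_left h1 hδ0.le
  calc ‖(φ t)⁻¹ * ∫ s in t0..t, φ s * f s‖
      = (φ t)⁻¹ * |∫ s in t0..t, φ s * f s| := by
        rw [Real.norm_eq_abs, abs_mul, abs_of_nonneg (inv_nonneg.2 hφtpos.le)]
    _ ≤ (φ t)⁻¹ * (C + δ * φ t) :=
        mul_le_mul_of_nonneg_left habs (inv_nonneg.2 hφtpos.le)
    _ ≤ (φ t)⁻¹ * (δ * φ t + δ * φ t) := by
        apply mul_le_mul_of_nonneg_left (add_le_add_left hCbound _) (inv_nonneg.2 hφtpos.le)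
    _ = 2 * δ := by field_simp; ring
    _ < ε := by rw [hδ]; linarith
end
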